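/- For any classical instance I = (A, ι^n) of unsigned strings such that b_ρ(I) > 0, Σ_A \ Σ_{ι^n} = ∅ (A contains no α-element), and A has at least one decreasing strip, there exists a reversal ρ such that b_ρ(A·ρ, ι^n) ≤ b_ρ(A, ι^n) − 1, i.e., ρ removes at least one unsigned-reversal breakpoint of A. -/

import Mathlib

/-- A gene of the origin string: either a label in `{1, …, n}` (`some x`) or an
`α`-element (`none`), i.e. a gene absent from the target genome. -/
abbrev Gene := Option ℕ

/-- `A` is a valid origin string for a classical instance `I = (A, ι^n)`:
all its labels lie in `{1, …, n}` and each label occurs at most once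
(`α`-elements may repeat). -/
def ValidString (n : ℕ) (A : List Gene) : Prop :=
  (∀ x : ℕ, some x ∈ A → 1 ≤ x ∧ x ≤ n) ∧ (∀ x : ℕ, A.count (some x) ≤ 1)

/-- The extended version of `A`: `A_0 = 0` and `A_{|A|+1} = n+1` are appended. -/
def extStr (n : ℕ) (A : List Gene) : List Gene :=
  some 0 :: (A ++ [some (n + 1)])

/-- `|Σ_{ι^n} \ Σ_A|`: the number of labels of the target absent from `A`. -/
def missingCount (n : ℕ) (A : List Gene) : ℕ :=
  ((Finset.Icc 1 n).filter (fun x => some x ∉ A)).card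

/-- `posterior(x, I)`: the smallest common label greater than `x`
(`n+1` if there is none, `α` for `x = α`). -/
def postOf (n : ℕ) (A : List Gene) : Gene → Gene
  | none => none
  | some x =>
    if h : ((Finset.Icc 1 n).filter (fun y => some y ∈ A ∧ x < y)).Nonempty then
      some (((Finset.Icc 1 n).filter (fun y => some y ∈ A ∧ x < y)).min' h)
    else
      some (n + 1)

/-- `anterior(x, I)`: the largest common label smaller than `x`
(`0` if there is none, `α` for `x = α`). -/
def antOf (n : ℕ) (A : List Gene) : Gene → Gene
  | none => none
  | some x =>
    if h : ((Finset.Icc 1 n).filter (fun y => some y ∈ A ∧ y < x)).Nonempty then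
      some (((Finset.Icc 1 n).filter (fun y => some y ∈ A ∧ y < x)).max' h)
    else
      some 0

/-- `b_τ(I)`: the number of transposition breakpoints of the instance `I = (A, ι^n)`. -/
def bT (n : ℕ) (A : List Gene) : ℕ :=
  ((Finset.range (A.length + 1)).filter (fun t =>
    (extStr n A).getD (t + 1) none ≠ postOf n A ((extStr n A).getD t none))).card

/-- `b_ρ(I)`: the number of unsigned-reversal breakpoints of the instance `I = (A, ι^n)`. -/
def bR (n : ℕ) (A : List Gene) : ℕ :=
  ((Finset.range (A.length + 1)).filter (fun t =>
    (extStr n A).getD (t + 1) none ≠ postOf n A ((extStr n A).getD t none) ∧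
    (extStr n A).getD (t + 1) none ≠ antOf n A ((extStr n A).getD t none))).card

/-- The reversal `ρ(i,j)`, `1 ≤ i ≤ j ≤ |A|`, with explicit parameters `i`, `j`:
it reverses the segment `(A_i … A_j)`, transforming `A` into `A'`. -/
def RevAt (A : List Gene) (i j : ℕ) (A' : List Gene) : Prop :=
  1 ≤ i ∧ i ≤ j ∧ j ≤ A.length ∧
  A' = A.take (i - 1) ++ ((A.drop (i - 1)).take (j - i + 1)).reverse ++ A.drop j

/-- `A'` is obtained from `A` by a reversal. -/
def RevN (A A' : List Gene) : Prop := ∃ i j : ℕ, RevAt A i j A'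

/-- `A'` is obtained from `A` by a transposition `τ(i,j,k)`, `1 ≤ i < j < k ≤ |A|+1`,
exchanging the adjacent segments `(A_i … A_{j−1})` and `(A_j … A_{k−1})`. -/
def TranspN (A A' : List Gene) : Prop :=
  ∃ i j k : ℕ, 1 ≤ i ∧ i < j ∧ j < k ∧ k ≤ A.length + 1 ∧
    A' = A.take (i - 1) ++ (A.drop (j - 1)).take (k - j) ++
         (A.drop (i - 1)).take (j - i) ++ A.drop (k - 1)

/-- `A'` is obtained from `A` by an insertion `φ(i,σ)`: a nonempty repetition-free
string `σ`, consisting only of labels of `Σ_{ι^n} \ Σ_A`, is inserted after position `i`. -/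
def InsN (n : ℕ) (A A' : List Gene) : Prop :=
  ∃ (i : ℕ) (σ : List Gene), i ≤ A.length ∧ σ ≠ [] ∧ σ.Nodup ∧
    (∀ e ∈ σ, ∃ x : ℕ, e = some x ∧ 1 ≤ x ∧ x ≤ n ∧ some x ∉ A) ∧
    A' = A.take i ++ σ ++ A.drop i

/-- `A'` is obtained from `A` by a deletion `ψ(i,j)`: the segment `(A_i … A_j)`,
consisting only of `α`-elements, is removed. -/
def DelN (A A' : List Gene) : Prop :=
  ∃ i j : ℕ, 1 ≤ i ∧ i ≤ j ∧ j ≤ A.length ∧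
    (∀ e ∈ (A.drop (i - 1)).take (j - i + 1), e = none) ∧
    A' = A.take (i - 1) ++ A.drop j

/-- The kinds of operations on strings. -/
inductive StrOp : Type
  | rev
  | transp
  | ins
  | del
deriving DecidableEq

def strOpRel (n : ℕ) : StrOp → List Gene → List Gene → Prop
  | StrOp.rev => RevN
  | StrOp.transp => TranspN
  | StrOp.ins => InsN n
  | StrOp.del => DelN

/-- The target string `ι^n = (1 2 … n)`. -/
def idList (n : ℕ) : List Gene := (List.range n).map (fun x => some (x + 1))

/-- `A` can be transformed into `ι^n` by a sequence of `s` operations of the model `M`. -/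
def Reaches (n : ℕ) (M : Set StrOp) : ℕ → List Gene → Prop
  | 0, A => A = idList n
  | s + 1, A => ∃ op ∈ M, ∃ A', strOpRel n op A A' ∧ Reaches n M s A'

/-- `d_M(A, ι^n)`: the minimum number of operations of the model `M` transforming
`A` into `ι^n` (`∞` if no such sequence exists). -/
noncomputable def distM (n : ℕ) (M : Set StrOp) (A : List Gene) : ℕ∞ :=
  sInf {c : ℕ∞ | ∃ s : ℕ, Reaches n M s A ∧ c = (s : ℕ∞)}

/-- The model `M^{φψ}_ρ`: reversals, insertions and deletions. -/
def Mrev : Set StrOp := {StrOp.rev, StrOp.ins, StrOp.del}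
/-- The model `M^{φψ}_τ`: transpositions, insertions and deletions. -/
def Mtra : Set StrOp := {StrOp.transp, StrOp.ins, StrOp.del}
/-- The model `M^{φψ}_{ρ,τ}`: reversals, transpositions, insertions and deletions. -/
def Mrevtra : Set StrOp := {StrOp.rev, StrOp.transp, StrOp.ins, StrOp.del}

/-- `(u, v)` is an unsigned-reversal breakpoint of the instance `I = (A, ι^n)`. -/
def IsBreakR (n : ℕ) (A : List Gene) (u v : Gene) : Prop :=
  v ≠ postOf n A u ∧ v ≠ antOf n A u

/-- `A` has at least one decreasing strip: either some non-breakpoint adjacency is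
decreasing (the right element is the anterior of the left one), or some interior
non-`α` element is a singleton strip (it has breakpoints on both sides). -/
def HasDecStrip (n : ℕ) (A : List Gene) : Prop :=
  (∃ t : ℕ, t + 1 < (extStr n A).length ∧
    (extStr n A).getD t none ≠ none ∧
    (extStr n A).getD (t + 1) none = antOf n A ((extStr n A).getD t none)) ∨
  (∃ t : ℕ, 1 ≤ t ∧ t + 1 < (extStr n A).length ∧
    (extStr n A).getD t none ≠ none ∧
    IsBreakR n A ((extStr n A).getD (t - 1) none) ((extStr n A).getD t none) ∧
    IsBreakR n A ((extStr n A).getD t none) ((extStr n A).getD (t + 1) none))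

/-! ### Auxiliary machinery for counting breakpoints -/

/-- One step: `1` if the pair `(u, v)` is a breakpoint w.r.t. the successor
function `f` and predecessor function `g`, else `0`. -/
def stp (f g : Gene → Gene) (u v : Gene) : ℕ :=
  if v ≠ f u ∧ v ≠ g u then 1 else 0

/-- Number of breakpoint pairs among consecutive elements of a list. -/
def cnt (f g : Gene → Gene) : List Gene → ℕ
  | x :: y :: l => stp f g x y + cnt f g (y :: l)
  | _ => 0

lemma cnt_split (f g : Gene → Gene) :
    ∀ (L : List Gene) (x : Gene) (R : List Gene),
      cnt f g (L ++ x :: R) = cnt f g (L ++ [x]) + cnt f g (x :: R) := by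
  intro L
  induction L with
  | nil => intro x R; simp [cnt]
  | cons a L ih =>
    intro x R
    cases L with
    | nil => simp [cnt]
    | cons c L' =>
      have h := ih x R
      show cnt f g (a :: c :: (L' ++ x :: R)) =
        cnt f g (a :: c :: (L' ++ [x])) + cnt f g (x :: R)
      show stp f g a c + cnt f g (c :: (L' ++ x :: R)) =
        stp f g a c + cnt f g (c :: (L' ++ [x])) + cnt f g (x :: R)
      have h' : cnt f g (c :: (L' ++ x :: R)) =
          cnt f g (c :: (L' ++ [x])) + cnt f g (x :: R) := h
      omega

lemma cnt_three (f g : Gene → Gene) (X M Y : List Gene)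
    (xi : List Gene) (xl : Gene) (hX : X = xi ++ [xl])
    (mh : Gene) (mt : List Gene) (hM1 : M = mh :: mt)
    (mi : List Gene) (ml : Gene) (hM2 : M = mi ++ [ml])
    (yh : Gene) (yt : List Gene) (hY : Y = yh :: yt) :
    cnt f g (X ++ M ++ Y) =
      cnt f g X + stp f g xl mh + cnt f g M + stp f g ml yh + cnt f g Y := by
  have e1 : X ++ M ++ Y = X ++ mh :: (mt ++ Y) := by simp [hM1]
  rw [e1, cnt_split]
  have e2 : cnt f g (X ++ [mh]) = cnt f g X + stp f g xl mh := by
    rw [hX]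
    have : xi ++ [xl] ++ [mh] = xi ++ xl :: [mh] := by simp
    rw [this, cnt_split]
    simp [cnt]
  have e3 : mh :: (mt ++ Y) = mi ++ ml :: Y := by
    rw [← List.cons_append, ← hM1, hM2]; simp
  rw [e2, e3, cnt_split]
  have e4 : cnt f g (mi ++ [ml]) = cnt f g M := by rw [hM2]
  have e5 : cnt f g (ml :: Y) = stp f g ml yh + cnt f g Y := by
    rw [hY]; rfl
  rw [e4, e5]; ring

lemma cnt_reverse (f g : Gene → Gene) (l : List Gene)
    (hsym : ∀ u ∈ l, ∀ v ∈ l, stp f g u v = stp f g v u) :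
    cnt f g l.reverse = cnt f g l := by
  induction l with
  | nil => rfl
  | cons x t ih =>
    cases t with
    | nil => rfl
    | cons y t' =>
      have hsym' : ∀ u ∈ y :: t', ∀ v ∈ y :: t', stp f g u v = stp f g v u := by
        intro u hu v hv
        exact hsym u (List.mem_cons_of_mem _ hu) v (List.mem_cons_of_mem _ hv)
      have ih' := ih hsym'
      have e1 : (x :: y :: t').reverse = (y :: t').reverse ++ [x] := by simp
      have e2 : (y :: t').reverse = t'.reverse ++ [y] := by simp
      rw [e1, e2]
      have : t'.reverse ++ [y] ++ [x] = t'.reverse ++ y :: [x] := by simp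
      rw [this, cnt_split, ← e2, ih']
      have hxy : stp f g y x = stp f g x y :=
        hsym y (by simp) x (by simp)
      show cnt f g (y :: t') + cnt f g [y, x] = cnt f g (x :: y :: t')
      show cnt f g (y :: t') + (stp f g y x + cnt f g [x]) =
        stp f g x y + cnt f g (y :: t')
      simp [cnt, hxy]; omega

lemma card_filter_pairs (f g : Gene → Gene) :
    ∀ (L : List Gene) (m : ℕ), L.length = m + 1 →
      ((Finset.range m).filter (fun t =>
        L.getD (t + 1) none ≠ f (L.getD t none) ∧
        L.getD (t + 1) none ≠ g (L.getD t none))).card = cnt f g L := by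
  intro L
  induction L with
  | nil => intro m hm; simp at hm
  | cons x l ih =>
    intro m hm
    cases l with
    | nil =>
      have : m = 0 := by simpa using hm
      subst this; simp [cnt]
    | cons y t =>
      have hm' : m = t.length + 1 := by simpa using hm.symm
      subst hm'
      rw [Finset.card_filter, Finset.sum_range_succ']
      have hF0 : (if ((x :: y :: t).getD (0 + 1) none ≠ f ((x :: y :: t).getD 0 none) ∧
          (x :: y :: t).getD (0 + 1) none ≠ g ((x :: y :: t).getD 0 none)) then 1 else 0)
          = stp f g x y := by
        simp [stp]
      have hFs : ∀ i, (if ((x :: y :: t).getD (i + 1 + 1) none ≠ f ((x :: y :: t).getD (i + 1) none) ∧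
          (x :: y :: t).getD (i + 1 + 1) none ≠ g ((x :: y :: t).getD (i + 1) none)) then 1 else 0)
          = (if ((y :: t).getD (i + 1) none ≠ f ((y :: t).getD i none) ∧
          (y :: t).getD (i + 1) none ≠ g ((y :: t).getD i none)) then (1 : ℕ) else 0) := by
        intro i; simp [List.getD_cons_succ]
      have ihy := ih (t.length) (by simp)
      rw [Finset.card_filter] at ihy
      calc (∑ i ∈ Finset.range t.length, if ((x :: y :: t).getD (i + 1 + 1) none ≠ f ((x :: y :: t).getD (i + 1) none) ∧
          (x :: y :: t).getD (i + 1 + 1) none ≠ g ((x :: y :: t).getD (i + 1) none)) then 1 else 0)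
          + (if ((x :: y :: t).getD (0 + 1) none ≠ f ((x :: y :: t).getD 0 none) ∧
          (x :: y :: t).getD (0 + 1) none ≠ g ((x :: y :: t).getD 0 none)) then 1 else 0)
          = cnt f g (y :: t) + stp f g x y := by
            rw [hF0, Finset.sum_congr rfl (fun i _ => hFs i), ihy]
        _ = cnt f g (x :: y :: t) := by
            show cnt f g (y :: t) + stp f g x y = stp f g x y + cnt f g (y :: t)
            omega

lemma bR_eq_cnt (n : ℕ) (A : List Gene) :
    bR n A = cnt (postOf n A) (antOf n A) (extStr n A) := by
  have h : (extStr n A).length = (A.length + 1) + 1 := by simp [extStr]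
  exact card_filter_pairs (postOf n A) (antOf n A) (extStr n A) (A.length + 1) h

lemma postOf_some (n : ℕ) (A : List Gene) (x : ℕ) :
    postOf n A (some x) =
      if h : ((Finset.Icc 1 n).filter (fun y => some y ∈ A ∧ x < y)).Nonempty then
        some (((Finset.Icc 1 n).filter (fun y => some y ∈ A ∧ x < y)).min' h)
      else some (n + 1) := rfl

lemma antOf_some (n : ℕ) (A : List Gene) (x : ℕ) :
    antOf n A (some x) =
      if h : ((Finset.Icc 1 n).filter (fun y => some y ∈ A ∧ y < x)).Nonempty then
        some (((Finset.Icc 1 n).filter (fun y => some y ∈ A ∧ y < x)).max' h)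
      else some 0 := rfl

lemma post_of_ant (n : ℕ) (A : List Gene) (x : ℕ) (hx : some x ∈ A)
    (hx1 : 1 ≤ x) (hxn : x ≤ n) (m : ℕ)
    (h : antOf n A (some x) = some m) :
    postOf n A (some m) = some x := by
  rw [antOf_some] at h
  rw [postOf_some]
  by_cases hne : ((Finset.Icc 1 n).filter (fun y => some y ∈ A ∧ y < x)).Nonempty
  · rw [dif_pos hne] at h
    have hm : m = ((Finset.Icc 1 n).filter (fun y => some y ∈ A ∧ y < x)).max' hne := by
      simpa using h.symm
    have hmem := ((Finset.Icc 1 n).filter (fun y => some y ∈ A ∧ y < x)).max'_mem hne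
    rw [← hm] at hmem
    simp only [Finset.mem_filter, Finset.mem_Icc] at hmem
    obtain ⟨⟨hm1, hmn⟩, hmA, hmx⟩ := hmem
    have hmax : ∀ z ∈ (Finset.Icc 1 n).filter (fun y => some y ∈ A ∧ y < x), z ≤ m := by
      intro z hz; rw [hm]; exact Finset.le_max' _ z hz
    have hxmem : x ∈ (Finset.Icc 1 n).filter (fun y => some y ∈ A ∧ m < y) := by
      simp only [Finset.mem_filter, Finset.mem_Icc]; exact ⟨⟨hx1, hxn⟩, hx, hmx⟩
    have hne' : ((Finset.Icc 1 n).filter (fun y => some y ∈ A ∧ m < y)).Nonempty := ⟨x, hxmem⟩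
    rw [dif_pos hne']
    congr 1
    apply le_antisymm (Finset.min'_le _ x hxmem)
    apply Finset.le_min'
    intro z hz
    simp only [Finset.mem_filter, Finset.mem_Icc] at hz
    obtain ⟨⟨hz1, hzn⟩, hzA, hmz⟩ := hz
    by_contra hlt
    push_neg at hlt
    have hz' : z ∈ (Finset.Icc 1 n).filter (fun y => some y ∈ A ∧ y < x) := by
      simp only [Finset.mem_filter, Finset.mem_Icc]; exact ⟨⟨hz1, hzn⟩, hzA, hlt⟩
    have : z ≤ m := hmax z hz' 
    omega
  · rw [dif_neg hne] at h
    have hm0 : m = 0 := by simpa using h.symm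
    subst hm0
    have hxmem : x ∈ (Finset.Icc 1 n).filter (fun y => some y ∈ A ∧ 0 < y) := by
      simp only [Finset.mem_filter, Finset.mem_Icc]; exact ⟨⟨hx1, hxn⟩, hx, by omega⟩
    have hne' : ((Finset.Icc 1 n).filter (fun y => some y ∈ A ∧ 0 < y)).Nonempty := ⟨x, hxmem⟩
    rw [dif_pos hne']
    congr 1
    apply le_antisymm (Finset.min'_le _ x hxmem)
    apply Finset.le_min'
    intro z hz
    simp only [Finset.mem_filter, Finset.mem_Icc] at hz
    obtain ⟨⟨hz1, hzn⟩, hzA, _⟩ := hz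
    by_contra hlt
    push_neg at hlt
    have : ((Finset.Icc 1 n).filter (fun y => some y ∈ A ∧ y < x)).Nonempty :=
      ⟨z, by simp only [Finset.mem_filter, Finset.mem_Icc]; exact ⟨⟨hz1, hzn⟩, hzA, hlt⟩⟩
    exact hne this

lemma ant_of_post (n : ℕ) (A : List Gene) (x : ℕ) (hx : some x ∈ A)
    (hx1 : 1 ≤ x) (hxn : x ≤ n) (m : ℕ) (hm : some m ∈ A) (hmn : m ≤ n)
    (h : postOf n A (some x) = some m) :
    antOf n A (some m) = some x := by
  rw [postOf_some] at h
  rw [antOf_some]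
  by_cases hne : ((Finset.Icc 1 n).filter (fun y => some y ∈ A ∧ x < y)).Nonempty
  · rw [dif_pos hne] at h
    have hmeq : m = ((Finset.Icc 1 n).filter (fun y => some y ∈ A ∧ x < y)).min' hne := by
      simpa using h.symm
    have hmem := ((Finset.Icc 1 n).filter (fun y => some y ∈ A ∧ x < y)).min'_mem hne
    rw [← hmeq] at hmem
    simp only [Finset.mem_filter, Finset.mem_Icc] at hmem
    obtain ⟨⟨hm1, hmn'⟩, hmA, hxm⟩ := hmem
    have hmin : ∀ z ∈ (Finset.Icc 1 n).filter (fun y => some y ∈ A ∧ x < y), m ≤ z := by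
      intro z hz; rw [hmeq]; exact Finset.min'_le _ z hz
    have hxmem : x ∈ (Finset.Icc 1 n).filter (fun y => some y ∈ A ∧ y < m) := by
      simp only [Finset.mem_filter, Finset.mem_Icc]; exact ⟨⟨hx1, hxn⟩, hx, hxm⟩
    have hne' : ((Finset.Icc 1 n).filter (fun y => some y ∈ A ∧ y < m)).Nonempty := ⟨x, hxmem⟩
    rw [dif_pos hne']
    congr 1
    apply le_antisymm _ (Finset.le_max' _ x hxmem)
    apply Finset.max'_le
    intro z hz
    simp only [Finset.mem_filter, Finset.mem_Icc] at hz
    obtain ⟨⟨hz1, hzn⟩, hzA, hzm⟩ := hz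
    by_contra hlt
    push_neg at hlt
    have hz' : z ∈ (Finset.Icc 1 n).filter (fun y => some y ∈ A ∧ x < y) := by
      simp only [Finset.mem_filter, Finset.mem_Icc]; exact ⟨⟨hz1, hzn⟩, hzA, hlt⟩
    have : m ≤ z := hmin z hz' 
    omega
  · rw [dif_neg hne] at h
    have : m = n + 1 := by simpa using h.symm
    omega

/-- `stp` is symmetric on genes occurring in `A`. -/
lemma stp_symm (n : ℕ) (A : List Gene) (hA : ValidString n A)
    (hno : (none : Gene) ∉ A)
    (u v : Gene) (hu : u ∈ A) (hv : v ∈ A) :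
    stp (postOf n A) (antOf n A) u v = stp (postOf n A) (antOf n A) v u := by
  have key : ∀ (x y : ℕ), some x ∈ A → some y ∈ A →
      (some y = postOf n A (some x) ∨ some y = antOf n A (some x)) →
      (some x = postOf n A (some y) ∨ some x = antOf n A (some y)) := by
    intro x y hx hy h
    obtain ⟨hx1, hxn⟩ := hA.1 x hx
    obtain ⟨hy1, hyn⟩ := hA.1 y hy
    rcases h with h | h
    · exact Or.inr (ant_of_post n A x hx hx1 hxn y hy hyn h.symm).symm
    · exact Or.inl (post_of_ant n A x hx hx1 hxn y h.symm).symm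
  obtain ⟨x, hxu⟩ : ∃ x : ℕ, u = some x := by
    cases u with
    | none => exact absurd hu hno
    | some x => exact ⟨x, rfl⟩
  obtain ⟨y, hyv⟩ : ∃ y : ℕ, v = some y := by
    cases v with
    | none => exact absurd hv hno
    | some y => exact ⟨y, rfl⟩
  subst hxu hyv
  have hiff : ((some y : Gene) = postOf n A (some x) ∨ (some y : Gene) = antOf n A (some x)) ↔
      ((some x : Gene) = postOf n A (some y) ∨ (some x : Gene) = antOf n A (some y)) :=
    ⟨key x y hu hv, key y x hv hu⟩
  unfold stp
  have : ((some y : Gene) ≠ postOf n A (some x) ∧ (some y : Gene) ≠ antOf n A (some x)) ↔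
      ((some x : Gene) ≠ postOf n A (some y) ∧ (some x : Gene) ≠ antOf n A (some y)) := by
    constructor <;> intro h <;> constructor <;> intro hc
    · exact (not_or.mpr ⟨h.1, h.2⟩) (hiff.mpr (Or.inl hc))
    · exact (not_or.mpr ⟨h.1, h.2⟩) (hiff.mpr (Or.inr hc))
    · exact (not_or.mpr ⟨h.1, h.2⟩) (hiff.mp (Or.inl hc))
    · exact (not_or.mpr ⟨h.1, h.2⟩) (hiff.mp (Or.inr hc))
  exact if_congr this rfl rfl

lemma getD_append_left' (L R : List Gene) (i : ℕ) (h : i < L.length) :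
    (L ++ R).getD i none = L.getD i none := by
  simp [List.getD_eq_getElem?_getD, List.getElem?_append_left h]

lemma getD_append_right' (L R : List Gene) (i : ℕ) (h : L.length ≤ i) :
    (L ++ R).getD i none = R.getD (i - L.length) none := by
  simp [List.getD_eq_getElem?_getD, List.getElem?_append_right h]

lemma postOf_congr (n : ℕ) (A A' : List Gene)
    (h : ∀ y : ℕ, some y ∈ A' ↔ some y ∈ A) : postOf n A' = postOf n A := by
  funext u
  cases u with
  | none => rfl
  | some x =>
    rw [postOf_some, postOf_some]
    have hf : ((Finset.Icc 1 n).filter (fun y => some y ∈ A' ∧ x < y)) =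
        ((Finset.Icc 1 n).filter (fun y => some y ∈ A ∧ x < y)) := by
      apply Finset.filter_congr
      intro y _
      rw [h y]
    rw [hf]

lemma antOf_congr (n : ℕ) (A A' : List Gene)
    (h : ∀ y : ℕ, some y ∈ A' ↔ some y ∈ A) : antOf n A' = antOf n A := by
  funext u
  cases u with
  | none => rfl
  | some x =>
    rw [antOf_some, antOf_some]
    have hf : ((Finset.Icc 1 n).filter (fun y => some y ∈ A' ∧ y < x)) =
        ((Finset.Icc 1 n).filter (fun y => some y ∈ A ∧ y < x)) := by
      apply Finset.filter_congr
      intro y _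
      rw [h y]
    rw [hf]

lemma ext_length (n : ℕ) (A : List Gene) : (extStr n A).length = A.length + 2 := by
  simp [extStr]

lemma ext_getD_zero (n : ℕ) (A : List Gene) : (extStr n A).getD 0 none = some 0 := rfl

lemma ext_getD_mem (n : ℕ) (A : List Gene) (t : ℕ) (h1 : 1 ≤ t) (h2 : t ≤ A.length) :
    (extStr n A).getD t none ∈ A := by
  obtain ⟨s, rfl⟩ : ∃ s, t = s + 1 := ⟨t - 1, by omega⟩
  show (A ++ [some (n + 1)]).getD s none ∈ A
  rw [getD_append_left' _ _ s (by omega)]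
  rw [List.getD_eq_getElem?_getD, List.getElem?_eq_getElem (by omega : s < A.length)]
  exact List.getElem_mem _

lemma ext_getD_last (n : ℕ) (A : List Gene) :
    (extStr n A).getD (A.length + 1) none = some (n + 1) := by
  show (A ++ [some (n + 1)]).getD A.length none = some (n + 1)
  rw [getD_append_right' _ _ _ (le_refl _)]
  simp

lemma ext_getD_big (n : ℕ) (A : List Gene) (t : ℕ) (h : A.length + 2 ≤ t) :
    (extStr n A).getD t none = none := by
  rw [List.getD_eq_getElem?_getD, List.getElem?_eq_none (by rw [ext_length]; omega)]
  rfl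

lemma count_eq_of_lawful {α : Type} (i1 i2 : BEq α) (h1 : @LawfulBEq α i1)
    (h2 : @LawfulBEq α i2) (l : List α) (a : α) :
    @List.count α i1 a l = @List.count α i2 a l := by
  induction l with
  | nil => rfl
  | cons b t ih =>
    rw [@List.count_cons α i1, @List.count_cons α i2, ih]
    by_cases h : b = a
    · subst h
      rw [@beq_self_eq_true α i1, @beq_self_eq_true α i2]
    · rw [(@beq_eq_false_iff_ne α i1 h1 b a).mpr h, (@beq_eq_false_iff_ne α i2 h2 b a).mpr h]

lemma nodupA (n : ℕ) (A : List Gene) (hA : ValidString n A)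
    (hno : (none : Gene) ∉ A) : A.Nodup := by
  rw [List.nodup_iff_count_le_one]
  intro a
  have h2 : A.count a ≤ 1 := by
    cases a with
    | none => rw [List.count_eq_zero_of_not_mem hno]; omega
    | some x => exact hA.2 x
  refine le_trans (le_of_eq ?_) h2
  exact count_eq_of_lawful _ _ inferInstance inferInstance A a

lemma nodupE (n : ℕ) (A : List Gene) (hA : ValidString n A)
    (hno : (none : Gene) ∉ A) : (extStr n A).Nodup := by
  have hA' := nodupA n A hA hno
  rw [extStr, List.nodup_cons]
  constructor
  · intro hmem
    rw [List.mem_append] at hmem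
    rcases hmem with h | h
    · have := (hA.1 0 h).1; omega
    · simp at h
  · rw [List.nodup_append]
    refine ⟨hA', by simp, ?_⟩
    intro a ha hb
    intro hb' hab
    simp only [List.mem_singleton] at hb'
    subst hb' hab
    have := (hA.1 (n + 1) ha).2; omega

lemma ext_getD_inj (n : ℕ) (A : List Gene) (hA : ValidString n A)
    (hno : (none : Gene) ∉ A) (s t : ℕ)
    (hs : s < A.length + 2) (ht : t < A.length + 2)
    (h : (extStr n A).getD s none = (extStr n A).getD t none) : s = t := by
  have hlen := ext_length n A
  rw [List.getD_eq_getElem?_getD, List.getD_eq_getElem?_getD,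
    List.getElem?_eq_getElem (by omega : s < (extStr n A).length),
    List.getElem?_eq_getElem (by omega : t < (extStr n A).length)] at h
  simp only [Option.getD_some] at h
  exact ((nodupE n A hA hno).getElem_inj_iff).mp h

/-- The value returned by `antOf` on a label is either `0` or a common label
smaller than the argument (with full characterization). -/
lemma antOf_cases (n : ℕ) (A : List Gene) (w : ℕ) (v : ℕ)
    (h : antOf n A (some w) = some v) :
    v = 0 ∨ (some v ∈ A ∧ 1 ≤ v ∧ v ≤ n ∧ v < w) := by
  rw [antOf_some] at h
  split_ifs at h with hne
  · right
    have hv : v = ((Finset.Icc 1 n).filter (fun y => some y ∈ A ∧ y < w)).max' hne := by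
      simpa using h.symm
    have hmem := ((Finset.Icc 1 n).filter (fun y => some y ∈ A ∧ y < w)).max'_mem hne
    rw [← hv] at hmem
    simp only [Finset.mem_filter, Finset.mem_Icc] at hmem
    exact ⟨hmem.2.1, hmem.1.1, hmem.1.2, hmem.2.2⟩
  · left; simpa using h.symm

/-- Following a decreasing strip rightwards, one reaches a position followed by
a breakpoint, at a value not exceeding the starting value. -/
lemma run_lemma (n : ℕ) (A : List Gene) (hA : ValidString n A)
    (hno : (none : Gene) ∉ A) :
    ∀ v : ℕ, ∀ t : ℕ, 1 ≤ t → t ≤ A.length →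
      (extStr n A).getD t none = some v →
      (extStr n A).getD t none = antOf n A ((extStr n A).getD (t - 1) none) →
      ∃ t' v', 1 ≤ t' ∧ t' ≤ A.length ∧ (extStr n A).getD t' none = some v' ∧ v' ≤ v ∧
        (extStr n A).getD t' none = antOf n A ((extStr n A).getD (t' - 1) none) ∧
        ((extStr n A).getD (t' + 1) none ≠ postOf n A ((extStr n A).getD t' none) ∧
         (extStr n A).getD (t' + 1) none ≠ antOf n A ((extStr n A).getD t' none)) := by
  intro v
  induction v using Nat.strong_induction_on with
  | _ v ih =>
    intro t ht1 htN hBt hdec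
    -- the element at `t` is a genuine label of `A`
    have hBtA : (extStr n A).getD t none ∈ A := ext_getD_mem n A t ht1 htN
    have hvA : some v ∈ A := hBt ▸ hBtA
    obtain ⟨hv1, hvn⟩ := hA.1 v hvA
    -- the element at `t - 1` is a label `w` (possibly `0` when `t = 1`)
    by_cases hbrk : ((extStr n A).getD (t + 1) none ≠ postOf n A ((extStr n A).getD t none) ∧
        (extStr n A).getD (t + 1) none ≠ antOf n A ((extStr n A).getD t none))
    · exact ⟨t, v, ht1, htN, hBt, le_refl v, hdec, hbrk⟩
    · -- the pair `(t, t+1)` is not a breakpoint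
      rw [not_and_or, not_ne_iff, not_ne_iff] at hbrk
      rcases hbrk with hpost | hant
      · -- `B (t+1) = post (B t)`; this duplicates `B (t-1)`, contradiction
        exfalso
        -- first, identify `w` at `t - 1`
        have ht2 : 2 ≤ t := by
          by_contra hlt
          have ht1' : t = 1 := by omega
          subst ht1'
          have h0 : (extStr n A).getD 0 none = some 0 := ext_getD_zero n A
          rw [h0] at hdec
          have : antOf n A (some 0) = some 0 := by
            rw [antOf_some, dif_neg]
            rintro ⟨z, hz⟩
            simp only [Finset.mem_filter, Finset.mem_Icc] at hz
            omega
          rw [this] at hdec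
          rw [hBt] at hdec
          have : v = 0 := by simpa using hdec
          omega
        have hBt1A : (extStr n A).getD (t - 1) none ∈ A :=
          ext_getD_mem n A (t - 1) (by omega) (by omega)
        obtain ⟨w, hw⟩ : ∃ w : ℕ, (extStr n A).getD (t - 1) none = some w := by
          cases hc : (extStr n A).getD (t - 1) none with
          | none => rw [hc] at hBt1A; exact absurd hBt1A hno
          | some w => exact ⟨w, rfl⟩
        rw [hw] at hdec
        rw [hBt] at hdec
        obtain ⟨hw1, hwn⟩ := hA.1 w (hw ▸ hBt1A)
        have hpostv : postOf n A (some v) = some w :=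
          post_of_ant n A w (hw ▸ hBt1A) hw1 hwn v hdec.symm
        rw [hBt, hpostv] at hpost
        -- now `B (t+1) = some w = B (t-1)` with `t+1 ≠ t-1`
        have := ext_getD_inj n A hA hno (t + 1) (t - 1) (by omega) (by omega)
          (by rw [hpost, hw])
        omega
      · -- `B (t+1) = ant (B t) = ant (some v)`, continue the run
        rw [hBt] at hant
        -- `t + 1 ≤ N`
        have htN' : t + 1 ≤ A.length := by
          by_contra hgt
          have ht' : t = A.length := by omega
          have : (extStr n A).getD (t + 1) none = some (n + 1) := by
            rw [ht']; exact ext_getD_last n A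
          rw [this] at hant
          rcases antOf_cases n A v (n + 1) hant.symm with h0 | ⟨_, _, hle, _⟩ <;> omega
        have hBt1A' : (extStr n A).getD (t + 1) none ∈ A :=
          ext_getD_mem n A (t + 1) (by omega) htN'
        obtain ⟨v'', hv''⟩ : ∃ v'' : ℕ, (extStr n A).getD (t + 1) none = some v'' := by
          cases hc : (extStr n A).getD (t + 1) none with
          | none => rw [hc] at hBt1A'; exact absurd hBt1A' hno
          | some w => exact ⟨w, rfl⟩
        rw [hv''] at hant
        rcases antOf_cases n A v v'' hant.symm with h0 | ⟨_, _, _, hlt⟩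
        · -- `v'' = 0` at a position of `A`: impossible
          exfalso
          subst h0
          have := (hA.1 0 (hv'' ▸ hBt1A')).1
          omega
        · obtain ⟨t', v', h1, h2, h3, h4, h5, h6⟩ := ih v'' hlt (t + 1) (by omega) htN'
            hv'' (by
              have he : t + 1 - 1 = t := by omega
              rw [hv'', he, hBt]; exact hant)
          exact ⟨t', v', h1, h2, h3, by omega, h5, h6⟩

lemma getD_at_join (L R : List Gene) (x : Gene) (i : ℕ) (h : L.length = i) :
    (L ++ x :: R).getD i none = x := by
  subst h
  rw [getD_append_right' _ _ _ (le_refl _)]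
  simp

/-- If positions `a < b` are both followed by breakpoints while the pair
`(B_a, B_b)` is an adjacency, then the reversal `ρ(a+1, b)` removes a breakpoint. -/
lemma main_count (n : ℕ) (A : List Gene) (hA : ValidString n A)
    (hno : (none : Gene) ∉ A)
    (a b : ℕ) (hab : a < b) (hbN : b ≤ A.length)
    (hbrka : (extStr n A).getD (a + 1) none ≠ postOf n A ((extStr n A).getD a none) ∧
             (extStr n A).getD (a + 1) none ≠ antOf n A ((extStr n A).getD a none))
    (hbrkb : (extStr n A).getD (b + 1) none ≠ postOf n A ((extStr n A).getD b none) ∧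
             (extStr n A).getD (b + 1) none ≠ antOf n A ((extStr n A).getD b none))
    (hadj : ¬((extStr n A).getD b none ≠ postOf n A ((extStr n A).getD a none) ∧
              (extStr n A).getD b none ≠ antOf n A ((extStr n A).getD a none))) :
    ∃ A' : List Gene, RevN A A' ∧ bR n A' + 1 ≤ bR n A := by
  set f := postOf n A with hfdef
  set g := antOf n A with hgdef
  set X : List Gene := some 0 :: A.take a with hXdef
  set M : List Gene := (A.drop a).take (b - a) with hMdef
  set Y : List Gene := A.drop b ++ [some (n + 1)] with hYdef
  set A' : List Gene := A.take a ++ M.reverse ++ A.drop b with hA'def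
  have haN : a < A.length := by omega
  have hMlen : M.length = b - a := by
    rw [hMdef]; simp [List.length_take, List.length_drop]; omega
  have hXlen : X.length = a + 1 := by
    rw [hXdef]; simp [List.length_take]; omega
  have hAsplit : A = A.take a ++ M ++ A.drop b := by
    rw [hMdef, List.append_assoc]
    have h1 : (A.drop a).take (b - a) ++ (A.drop a).drop (b - a) = A.drop a :=
      List.take_append_drop _ _
    have h2 : (A.drop a).drop (b - a) = A.drop b := by
      rw [List.drop_drop]
      congr 1
      omega
    rw [← h2] at *
    rw [h1]
    exact (List.take_append_drop a A).symm
  -- extended strings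
  have hE : extStr n A = X ++ M ++ Y := by
    rw [extStr]
    conv_lhs => rw [hAsplit]
    rw [hXdef, hYdef]
    simp [List.append_assoc]
  have hE' : extStr n A' = X ++ M.reverse ++ Y := by
    rw [extStr, hA'def, hXdef, hYdef]
    simp [List.append_assoc]
  -- permutation facts
  have hperm : A'.Perm A := by
    have h1 : (A.take a ++ (M.reverse ++ A.drop b)).Perm (A.take a ++ (M ++ A.drop b)) :=
      List.Perm.append_left _ (List.Perm.append_right _ (List.reverse_perm M))
    have h2 : A' = A.take a ++ (M.reverse ++ A.drop b) := by
      rw [hA'def, List.append_assoc]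
    rw [h2]
    refine h1.trans ?_
    rw [← List.append_assoc, ← hAsplit]
  have hmem : ∀ y : ℕ, some y ∈ A' ↔ some y ∈ A := fun y => hperm.mem_iff
  have hlenA' : A'.length = A.length := hperm.length_eq
  -- decompositions
  have hXne : X ≠ [] := by rw [hXdef]; simp
  have hMne : M ≠ [] := by
    intro h; rw [h] at hMlen; simp at hMlen; omega
  have hYne : Y ≠ [] := by rw [hYdef]; simp
  obtain ⟨xi, xl, hX⟩ : ∃ xi xl, X = xi ++ [xl] := by
    rcases List.eq_nil_or_concat X with h | ⟨xi, xl, h⟩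
    · exact absurd h hXne
    · exact ⟨xi, xl, by simpa using h⟩
  obtain ⟨mh, mt, hM1⟩ := List.exists_cons_of_ne_nil hMne
  obtain ⟨mi, ml, hM2⟩ : ∃ mi ml, M = mi ++ [ml] := by
    rcases List.eq_nil_or_concat M with h | ⟨mi, ml, h⟩
    · exact absurd h hMne
    · exact ⟨mi, ml, by simpa using h⟩
  obtain ⟨yh, yt, hY⟩ := List.exists_cons_of_ne_nil hYne
  have hxilen : xi.length = a := by
    have := hXlen; rw [hX] at this; simp at this; omega
  have hmilen : mi.length = b - a - 1 := by
    have := hMlen; rw [hM2] at this; simp at this; omega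
  -- identify boundary elements
  have hBa : (extStr n A).getD a none = xl := by
    rw [hE, hX]
    have e : xi ++ [xl] ++ M ++ Y = xi ++ xl :: (M ++ Y) := by simp
    rw [e]; exact getD_at_join _ _ _ a hxilen
  have hBa1 : (extStr n A).getD (a + 1) none = mh := by
    rw [hE, hM1]
    have e : X ++ mh :: mt ++ Y = X ++ mh :: (mt ++ Y) := by simp
    rw [e]; exact getD_at_join _ _ _ (a + 1) hXlen
  have hBb : (extStr n A).getD b none = ml := by
    rw [hE, hM2]
    have e : X ++ (mi ++ [ml]) ++ Y = (X ++ mi) ++ ml :: Y := by simp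
    rw [e]
    exact getD_at_join _ _ _ b (by simp [hXlen, hxilen, hmilen]; omega)
  have hBb1 : (extStr n A).getD (b + 1) none = yh := by
    rw [hE, hY]
    have e : X ++ M ++ yh :: yt = (X ++ M) ++ yh :: yt := by simp
    rw [e]
    exact getD_at_join _ _ _ (b + 1) (by simp [hXlen, hMlen]; omega)
  -- reversed decompositions
  have hMr1 : M.reverse = ml :: mi.reverse := by rw [hM2]; simp
  have hMr2 : M.reverse = mt.reverse ++ [mh] := by rw [hM1]; simp
  -- breakpoint counts
  have hcntA : bR n A = cnt f g X + stp f g xl mh + cnt f g M + stp f g ml yh + cnt f g Y := by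
    rw [bR_eq_cnt, hE, ← hfdef, ← hgdef]
    exact cnt_three f g X M Y xi xl hX mh mt hM1 mi ml hM2 yh yt hY
  have hcntA' : bR n A' =
      cnt f g X + stp f g xl ml + cnt f g M.reverse + stp f g mh yh + cnt f g Y := by
    rw [bR_eq_cnt, postOf_congr n A A' hmem, antOf_congr n A A' hmem, hE', ← hfdef, ← hgdef]
    exact cnt_three f g X M.reverse Y xi xl hX ml mi.reverse hMr1 mt.reverse mh hMr2 yh yt hY
  have hMsub : ∀ u ∈ M, u ∈ A := by
    intro u hu
    rw [hMdef] at hu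
    exact List.mem_of_mem_drop (List.mem_of_mem_take hu)
  have hcntrev : cnt f g M.reverse = cnt f g M := by
    apply cnt_reverse
    intro u hu v hv
    exact stp_symm n A hA hno u v (hMsub u hu) (hMsub v hv)
  -- the individual steps
  have hstp1 : stp f g xl mh = 1 := by
    rw [stp, if_pos]
    rw [← hBa, ← hBa1]; exact hbrka
  have hstp2 : stp f g ml yh = 1 := by
    rw [stp, if_pos]
    rw [← hBb, ← hBb1]; exact hbrkb
  have hstp3 : stp f g xl ml = 0 := by
    rw [stp, if_neg]
    rw [← hBa, ← hBb]; exact hadj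
  have hstp4 : stp f g mh yh ≤ 1 := by
    rw [stp]; split <;> omega
  refine ⟨A', ⟨a + 1, b, by omega, by omega, hbN, ?_⟩, by omega⟩
  rw [hA'def, hMdef]
  have e1 : a + 1 - 1 = a := by omega
  have e2 : b - (a + 1) + 1 = b - a := by omega
  rw [e1, e2]

/-- For any classical instance `I = (A, ι^n)` of unsigned strings such
that `b_ρ(I) > 0`, `Σ_A \ Σ_{ι^n} = ∅` (A contains no α-element), and `A` has at least one
decreasing strip, there exists a reversal removing at least one unsigned-reversal
breakpoint of `A`. -/
theorem reversal_removes_breakpoint_with_decreasing_strip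
    (n : ℕ) (A : List Gene) (hA : ValidString n A)
    (hb : 0 < bR n A) (hNoAlpha : (none : Gene) ∉ A)
    (hdec : HasDecStrip n A) :
    ∃ A' : List Gene, RevN A A' ∧ bR n A' + 1 ≤ bR n A := by
  classical
  -- `P t` : position `t` is the right end of a decreasing strip
  let P : ℕ → Prop := fun t =>
    ((extStr n A).getD (t + 1) none ≠ postOf n A ((extStr n A).getD t none) ∧
     (extStr n A).getD (t + 1) none ≠ antOf n A ((extStr n A).getD t none)) ∧
    (((extStr n A).getD t none ≠ postOf n A ((extStr n A).getD (t - 1) none) ∧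
      (extStr n A).getD t none ≠ antOf n A ((extStr n A).getD (t - 1) none)) ∨
     (extStr n A).getD t none = antOf n A ((extStr n A).getD (t - 1) none))
  have hDne : ((Finset.Icc 1 A.length).filter P).Nonempty := by
    rcases hdec with ⟨t, htlen, htnone, htant⟩ | ⟨t, ht1, htlen, htnone, hbl, hbr⟩
    · rw [ext_length] at htlen
      have hsN : t + 1 ≤ A.length := by
        by_contra hgt
        have hteq : t + 1 = A.length + 1 := by omega
        obtain ⟨w, hw⟩ : ∃ w, (extStr n A).getD t none = some w := by
          cases hc : (extStr n A).getD t none with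
          | none => exact absurd hc htnone
          | some w => exact ⟨w, rfl⟩
        rw [hw] at htant
        have hlast : (extStr n A).getD (t + 1) none = some (n + 1) := by
          rw [hteq]; exact ext_getD_last n A
        rw [hlast] at htant
        rcases antOf_cases n A w (n + 1) htant.symm with h0 | ⟨_, _, hle, _⟩ <;> omega
      obtain ⟨v, hv⟩ : ∃ v, (extStr n A).getD (t + 1) none = some v := by
        have hmem := ext_getD_mem n A (t + 1) (by omega) hsN
        cases hc : (extStr n A).getD (t + 1) none with
        | none => rw [hc] at hmem; exact absurd hmem hNoAlpha
        | some v => exact ⟨v, rfl⟩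
      obtain ⟨t', v', h1, h2, h3, _, h5, h6⟩ := run_lemma n A hA hNoAlpha v (t + 1)
        (by omega) hsN hv
        (by simpa only [Nat.add_sub_cancel] using htant)
      exact ⟨t', Finset.mem_filter.mpr ⟨Finset.mem_Icc.mpr ⟨h1, h2⟩, h6, Or.inr h5⟩⟩
    · rw [ext_length] at htlen
      exact ⟨t, Finset.mem_filter.mpr
        ⟨Finset.mem_Icc.mpr ⟨ht1, by omega⟩, hbr, Or.inl hbl⟩⟩
  obtain ⟨t0, ht0mem, ht0min⟩ := Finset.exists_min_image
    ((Finset.Icc 1 A.length).filter P)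
    (fun t => ((extStr n A).getD t none).getD 0) hDne
  obtain ⟨ht0Icc, hP0⟩ := Finset.mem_filter.mp ht0mem
  obtain ⟨ht01, ht0N⟩ := Finset.mem_Icc.mp ht0Icc
  obtain ⟨hbrk0, hleft0⟩ := hP0
  have hBt0A := ext_getD_mem n A t0 ht01 ht0N
  obtain ⟨k, hk⟩ : ∃ k, (extStr n A).getD t0 none = some k := by
    cases hc : (extStr n A).getD t0 none with
    | none => rw [hc] at hBt0A; exact absurd hBt0A hNoAlpha
    | some k => exact ⟨k, rfl⟩
  have hkA : some k ∈ A := hk ▸ hBt0A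
  obtain ⟨hk1, hkn⟩ := hA.1 k hkA
  -- the anterior of `k` sits at some position `q` with value `mv < k`
  obtain ⟨q, mv, hqN, hBq, hmvk, hantk⟩ : ∃ q mv, q ≤ A.length ∧
      (extStr n A).getD q none = some mv ∧ mv < k ∧
      antOf n A (some k) = some mv := by
    by_cases hne : ((Finset.Icc 1 n).filter (fun y => some y ∈ A ∧ y < k)).Nonempty
    · have hmmem := Finset.max'_mem _ hne
      simp only [Finset.mem_filter, Finset.mem_Icc] at hmmem
      obtain ⟨⟨hm1, hmn⟩, hmA, hmk⟩ := hmmem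
      obtain ⟨idx, hidx, hAidx⟩ := List.getElem_of_mem hmA
      refine ⟨idx + 1, _, by omega, ?_, hmk, ?_⟩
      · show (A ++ [some (n + 1)]).getD idx none = _
        rw [getD_append_left' _ _ idx (by omega)]
        rw [List.getD_eq_getElem?_getD, List.getElem?_eq_getElem hidx]
        simp [hAidx]
      · rw [antOf_some, dif_pos hne]
    · exact ⟨0, 0, by omega, ext_getD_zero n A, by omega,
        by rw [antOf_some, dif_neg hne]⟩
  have hgq : antOf n A ((extStr n A).getD t0 none) = (extStr n A).getD q none := by
    rw [hk, hantk, hBq]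
  have hpostq : postOf n A ((extStr n A).getD q none) = some k := by
    rw [hBq]; exact post_of_ant n A k hkA hk1 hkn mv hantk
  have hqt0 : q ≠ t0 := by
    intro h
    rw [h] at hBq
    have : some k = some mv := hk.symm.trans hBq
    injection this with h'
    omega
  -- `(q, q+1)` is a breakpoint
  have hbrkq : (extStr n A).getD (q + 1) none ≠ postOf n A ((extStr n A).getD q none) ∧
      (extStr n A).getD (q + 1) none ≠ antOf n A ((extStr n A).getD q none) := by
    constructor
    · intro hc
      rw [hpostq] at hc
      have hq1t0 : q + 1 = t0 := ext_getD_inj n A hA hNoAlpha (q + 1) t0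
        (by omega) (by omega) (by rw [hc, hk])
      have hq' : t0 - 1 = q := by omega
      rcases hleft0 with ⟨hl1, _⟩ | hl
      · exact hl1 (by rw [hq', hpostq]; exact hk)
      · rw [hq', hBq] at hl
        rw [hk] at hl
        rcases antOf_cases n A mv k hl.symm with h0 | ⟨_, _, _, hlt⟩ <;> omega
    · intro hc
      rw [hBq] at hc
      have hq1N : q + 1 ≤ A.length := by
        by_contra hgt
        have hq1 : q + 1 = A.length + 1 := by omega
        rw [hq1, ext_getD_last] at hc
        rcases antOf_cases n A mv (n + 1) hc.symm with h0 | ⟨_, _, hle, _⟩ <;> omega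
      have hmemA : (extStr n A).getD (q + 1) none ∈ A :=
        ext_getD_mem n A (q + 1) (by omega) hq1N
      obtain ⟨v'', hv''⟩ : ∃ v'', (extStr n A).getD (q + 1) none = some v'' := by
        cases hcc : (extStr n A).getD (q + 1) none with
        | none => rw [hcc] at hmemA; exact absurd hmemA hNoAlpha
        | some v'' => exact ⟨v'', rfl⟩
      rw [hv''] at hc
      rcases antOf_cases n A mv v'' hc.symm with h0 | ⟨_, _, _, hlt⟩
      · subst h0
        have := (hA.1 0 (hv'' ▸ hmemA)).1
        omega
      · obtain ⟨t', v', h1, h2, h3, h4, h5, h6⟩ := run_lemma n A hA hNoAlpha v'' (q + 1)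
          (by omega) hq1N hv''
          (by
            simp only [Nat.add_sub_cancel]
            rw [hv'', hBq]; exact hc)
        have ht'D : t' ∈ (Finset.Icc 1 A.length).filter P :=
          Finset.mem_filter.mpr ⟨Finset.mem_Icc.mpr ⟨h1, h2⟩, h6, Or.inr h5⟩
        have hmin := ht0min t' ht'D
        rw [hk, h3] at hmin
        simp only [Option.getD_some] at hmin
        omega
  -- apply the counting lemma with `a = min q t0`, `b = max q t0`
  rcases Nat.lt_or_ge q t0 with hlt | hge
  · exact main_count n A hA hNoAlpha q t0 hlt ht0N hbrkq hbrk0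
      (fun h => h.1 (by rw [hpostq]; exact hk))
  · have hlt' : t0 < q := by omega
    exact main_count n A hA hNoAlpha t0 q hlt' hqN hbrk0 hbrkq
      (fun h => h.2 hgq.symm)
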